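/- arXiv:1106.4074 — 2 statements merged into one kernel-verified Lean document; each statement's English description precedes it below -/
import Mathlib

section
/- Convex-like property of the limit sets of empiric probabilities: for every x ∈ M, if μ, ν ∈ pω(x) and λ is a real number with 0 ≤ λ ≤ 1, then there exists a measure μ_λ ∈ pω(x) such that dist(μ_λ, μ) = λ · dist(ν, μ), where dist is the Lévy–Prokhorov metric on P. -/
open MeasureTheory Filter Topology ENNReal NNReal

variable {M : Type*} [MetricSpace M] [CompactSpace M] [MeasurableSpace M] [BorelSpace M]

/-- The empiric probability `E_{n+1}(x) = (1/(n+1)) ∑_{j=0}^{n} δ_{f^j(x)}`.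
(The indexing is shifted: `empiric f x n` is the `(n+1)`-st empiric probability `E_{n+1}(x)`,
so that `(empiric f x n)_{n ≥ 0}` is exactly the sequence `(E_n(x))_{n ≥ 1}`.) -/
noncomputable def empiric (f : M → M) (x : M) (n : ℕ) : ProbabilityMeasure M :=
  ⟨((n : ℝ≥0∞) + 1)⁻¹ • ∑ j ∈ Finset.range (n + 1), MeasureTheory.Measure.dirac (f^[j] x), by
    constructor
    rw [Measure.smul_apply, Measure.finset_sum_apply]
    simp only [Measure.dirac_apply_of_mem (Set.mem_univ _), Finset.sum_const,
      Finset.card_range, nsmul_eq_mul, mul_one, smul_eq_mul]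
    rw [Nat.cast_add, Nat.cast_one]
    exact ENNReal.inv_mul_cancel (by simp) (by simp)⟩

/-- The limit set `pω(x)`: all weak* limits of convergent subsequences of the sequence
of empiric probabilities `(E_n(x))_{n ≥ 1}`. -/
def pomega (f : M → M) (x : M) : Set (ProbabilityMeasure M) :=
  {μ | ∃ φ : ℕ → ℕ, StrictMono φ ∧ Tendsto (fun k => empiric f x (φ k)) atTop (𝓝 μ)}

/-- The Lévy–Prokhorov distance between two Borel probability measures. -/
noncomputable def probDist (μ ν : ProbabilityMeasure M) : ℝ :=
  levyProkhorovDist (μ : Measure M) (ν : Measure M)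

/-- The basin of `ε`-attraction of `μ`:
`A_ε(μ) = {x ∈ M : inf_{ν ∈ pω(x)} dist(ν, μ) < ε}`. -/
def basinEps (f : M → M) (μ : ProbabilityMeasure M) (ε : ℝ) : Set M :=
  {x | (⨅ ν ∈ pomega f x, probDist ν μ) < ε}

/-- `μ` is observable (SRB-like): for every `ε > 0`, the basin of `ε`-attraction of `μ`
has positive `m`-measure. -/
def Observable (f : M → M) (m : Measure M) (μ : ProbabilityMeasure M) : Prop :=
  ∀ ε : ℝ, 0 < ε → 0 < m (basinEps f μ ε)

/-- The basin of attraction `A(μ) = {x ∈ M : pω(x) = {μ}}`. -/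
def basin (f : M → M) (μ : ProbabilityMeasure M) : Set M :=
  {x | pomega f x = {μ}}

/-- `μ` is an SRB (physical) measure: its basin of attraction has positive `m`-measure. -/
def IsSRB (f : M → M) (m : Measure M) (μ : ProbabilityMeasure M) : Prop :=
  0 < m (basin f μ)

section AuxiliaryLemmas

open Set

set_option linter.unusedSectionVars false

/-- union bound for probability measures, NNReal-valued -/
lemma pm_union_le (μ : ProbabilityMeasure M) (s t : Set M) : μ (s ∪ t) ≤ μ s + μ t := by
  rw [← ENNReal.coe_le_coe, ENNReal.coe_add]
  simp only [ProbabilityMeasure.ennreal_coeFn_eq_coeFn_toMeasure]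
  exact measure_union_le s t

lemma pm_add_le_of_disjoint (μ : ProbabilityMeasure M) {s t : Set M} (hd : Disjoint s t)
    (ht : MeasurableSet t) : μ s + μ t ≤ μ (s ∪ t) := by
  rw [← ENNReal.coe_le_coe, ENNReal.coe_add]
  simp only [ProbabilityMeasure.ennreal_coeFn_eq_coeFn_toMeasure]
  rw [measure_union hd ht]

theorem probabilityMeasure_tendsto_subseq (ρ : ℕ → ProbabilityMeasure M) :
    ∃ κ : ProbabilityMeasure M, ∃ φ : ℕ → ℕ, StrictMono φ ∧
      Tendsto (fun k => ρ (φ k)) atTop (𝓝 κ) := by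
  rcases isEmpty_or_nonempty M with hM | hM
  · exfalso
    have h1 : (ρ 0 : Measure M) univ = 1 := measure_univ
    rw [Set.univ_eq_empty_iff.mpr hM, measure_empty] at h1
    exact zero_ne_one h1
  -- countable basis
  obtain ⟨b, hbc, hbne, hbb⟩ := TopologicalSpace.exists_countable_basis M
  have hbnonempty : b.Nonempty := by
    rcases hbb.exists_subset_of_mem_open (mem_univ (Classical.arbitrary M)) isOpen_univ
      with ⟨v, hv, -, -⟩
    exact ⟨v, hv⟩
  obtain ⟨e, he⟩ := hbc.exists_eq_range hbnonempty
  have he_open : ∀ i, IsOpen (e i) := fun i =>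
    hbb.isOpen (by rw [he]; exact mem_range_self i)
  -- family of finite unions
  set B : Finset ℕ → Set M := fun S => ⋃ i ∈ S, e i with hB
  have hBopen : ∀ S, IsOpen (B S) := fun S => isOpen_biUnion fun i _ => he_open i
  have hBunion : ∀ S T, B (S ∪ T) = B S ∪ B T := fun S T => by
    simp [hB, Finset.set_biUnion_union]
  -- covering lemma
  have covering : ∀ K U : Set M, IsCompact K → IsOpen U → K ⊆ U →
      ∃ S : Finset ℕ, K ⊆ B S ∧ B S ⊆ U := by
    intro K U hK hU hKU
    have hcov : K ⊆ ⋃ i ∈ {i : ℕ | e i ⊆ U}, e i := by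
      intro y hy
      rcases hbb.exists_subset_of_mem_open (hKU hy) hU with ⟨v, hv, hyv, hvU⟩
      rw [he] at hv
      rcases hv with ⟨i, rfl⟩
      exact mem_biUnion hvU hyv
    obtain ⟨b', hb'sub, hb'fin, hb'cov⟩ := hK.elim_finite_subcover_image
      (fun i _ => he_open i) hcov
    refine ⟨hb'fin.toFinset, ?_, ?_⟩
    · intro y hy
      rcases mem_iUnion₂.mp (hb'cov hy) with ⟨i, hi, hyi⟩
      exact mem_biUnion (hb'fin.mem_toFinset.mpr hi) hyi
    · intro y hy
      rcases mem_iUnion₂.mp hy with ⟨i, hi, hyi⟩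
      exact hb'sub (hb'fin.mem_toFinset.mp hi) hyi
  obtain ⟨S₀, hS₀, -⟩ := covering univ univ isCompact_univ isOpen_univ subset_rfl
  have hS₀univ : B S₀ = univ := eq_univ_of_univ_subset hS₀
  -- extract subsequence with converging values on all B S
  have hcomp : IsCompact (Set.univ.pi fun _ : Finset ℕ => Set.Icc (0:ℝ≥0) 1) :=
    isCompact_univ_pi fun _ => isCompact_Icc
  obtain ⟨r, hrmem, φ, hφ, hr⟩ := hcomp.tendsto_subseq
    (x := fun k (S : Finset ℕ) => ρ k (B S))
    (fun k => by
      intro S _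
      exact ⟨zero_le, ProbabilityMeasure.apply_le_one _ _⟩)
  have hrS : ∀ S, Tendsto (fun k => ρ (φ k) (B S)) atTop (𝓝 (r S)) := by
    intro S
    exact (tendsto_pi_nhds.mp hr) S
  -- properties of r
  have r_mono : ∀ S T, B S ⊆ B T → r S ≤ r T := by
    intro S T h
    exact le_of_tendsto_of_tendsto' (hrS S) (hrS T)
      (fun k => ProbabilityMeasure.apply_mono _ h)
  have r_subadd : ∀ S T, r (S ∪ T) ≤ r S + r T := by
    intro S T
    refine le_of_tendsto_of_tendsto' (hrS (S ∪ T)) ((hrS S).add (hrS T)) (fun k => ?_)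
    rw [hBunion]
    exact pm_union_le _ _ _
  have r_superadd : ∀ S₁ S₂ S, Disjoint (B S₁) (B S₂) → B S₁ ∪ B S₂ ⊆ B S →
      r S₁ + r S₂ ≤ r S := by
    intro S₁ S₂ S hd hsub
    refine le_of_tendsto_of_tendsto' ((hrS S₁).add (hrS S₂)) (hrS S) (fun k => ?_)
    exact (pm_add_le_of_disjoint _ hd (hBopen S₂).measurableSet).trans
      (ProbabilityMeasure.apply_mono _ hsub)
  have r_univ : ∀ S, B S = univ → r S = 1 := by
    intro S h
    refine tendsto_nhds_unique (hrS S) ?_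
    simp only [h]
    simpa using tendsto_const_nhds
  have r_le_one : ∀ S, r S ≤ 1 := fun S => (hrmem S (mem_univ S)).2
  -- the content
  set lamE : TopologicalSpace.Compacts M → ℝ≥0∞ :=
    fun K => ⨅ (S : Finset ℕ) (_ : (K : Set M) ⊆ B S), (r S : ℝ≥0∞) with hlamE
  have lam_le : ∀ (K : TopologicalSpace.Compacts M) (S), (K : Set M) ⊆ B S →
      lamE K ≤ (r S : ℝ≥0∞) := fun K S h => iInf₂_le S h
  have le_lam : ∀ (K : TopologicalSpace.Compacts M) (c : ℝ≥0∞),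
      (∀ S, (K : Set M) ⊆ B S → c ≤ (r S : ℝ≥0∞)) → c ≤ lamE K :=
    fun K c h => le_iInf₂ h
  have lam_le_one : ∀ K, lamE K ≤ 1 := by
    intro K
    refine (lam_le K S₀ ?_).trans ?_
    · rw [hS₀univ]; exact subset_univ _
    · exact_mod_cast r_le_one S₀
  have lam_ne_top : ∀ K, lamE K ≠ ∞ := fun K => ((lam_le_one K).trans_lt one_lt_top).ne
  have lam_coe : ∀ K, ((lamE K).toNNReal : ℝ≥0∞) = lamE K := fun K =>
    ENNReal.coe_toNNReal (lam_ne_top K)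
  have lam_mono : ∀ K₁ K₂ : TopologicalSpace.Compacts M, (K₁ : Set M) ⊆ K₂ →
      lamE K₁ ≤ lamE K₂ :=
    fun K₁ K₂ h => le_lam _ _ fun S hS => lam_le _ _ (h.trans hS)
  have lam_sup_le : ∀ K₁ K₂ : TopologicalSpace.Compacts M,
      lamE (K₁ ⊔ K₂) ≤ lamE K₁ + lamE K₂ := by
    intro K₁ K₂
    rw [hlamE]
    simp only [iInf_subtype']
    rw [ENNReal.iInf_add]
    refine le_iInf fun ⟨S₁, hS₁⟩ => ?_
    rw [ENNReal.add_iInf]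
    refine le_iInf fun ⟨S₂, hS₂⟩ => ?_
    refine le_trans (iInf_le _ (⟨S₁ ∪ S₂, ?_⟩ : {S : Finset ℕ // ((K₁ ⊔ K₂ : TopologicalSpace.Compacts M) : Set M) ⊆ B S})) ?_
    · rw [hBunion]
      exact union_subset_union hS₁ hS₂
    · rw [← ENNReal.coe_add]
      exact_mod_cast r_subadd S₁ S₂
  have lam_sup_disjoint : ∀ K₁ K₂ : TopologicalSpace.Compacts M,
      Disjoint (K₁ : Set M) K₂ → lamE K₁ + lamE K₂ ≤ lamE (K₁ ⊔ K₂) := by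
    intro K₁ K₂ hd
    obtain ⟨V₁, V₂, hV₁, hV₂, hKV₁, hKV₂, hVd⟩ :=
      SeparatedNhds.of_isCompact_isCompact K₁.2 K₂.2 hd
    refine le_lam _ _ fun S hS => ?_
    obtain ⟨S₁, hKS₁, hS₁sub⟩ := covering K₁ (B S ∩ V₁) K₁.2 ((hBopen S).inter hV₁)
      (subset_inter ((subset_union_left).trans hS) hKV₁)
    obtain ⟨S₂, hKS₂, hS₂sub⟩ := covering K₂ (B S ∩ V₂) K₂.2 ((hBopen S).inter hV₂)
      (subset_inter ((subset_union_right).trans hS) hKV₂)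
    calc lamE K₁ + lamE K₂ ≤ (r S₁ : ℝ≥0∞) + (r S₂ : ℝ≥0∞) :=
          add_le_add (lam_le _ _ hKS₁) (lam_le _ _ hKS₂)
      _ = ((r S₁ + r S₂ : ℝ≥0) : ℝ≥0∞) := (ENNReal.coe_add _ _).symm
      _ ≤ (r S : ℝ≥0∞) := by
          exact_mod_cast r_superadd S₁ S₂ S
            (hVd.mono (hS₁sub.trans inter_subset_right) (hS₂sub.trans inter_subset_right))
            (union_subset (hS₁sub.trans inter_subset_left) (hS₂sub.trans inter_subset_left))
  set lam : Content M :=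
    { toFun := fun K => (lamE K).toNNReal
      mono' := fun K₁ K₂ h => by
        rw [← ENNReal.coe_le_coe, lam_coe, lam_coe]
        exact lam_mono K₁ K₂ h
      sup_disjoint' := fun K₁ K₂ hd _ _ => by
        rw [← ENNReal.coe_inj, lam_coe, ENNReal.coe_add, lam_coe, lam_coe]
        exact le_antisymm (lam_sup_le K₁ K₂) (lam_sup_disjoint K₁ K₂ hd)
      sup_le' := fun K₁ K₂ => by
        rw [← ENNReal.coe_le_coe, lam_coe, ENNReal.coe_add, lam_coe, lam_coe]
        exact lam_sup_le K₁ K₂ } with hlam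
  have lam_app : ∀ K, (lam K : ℝ≥0∞) = lamE K := fun K => lam_coe K
  -- the measure
  set κ₀ : Measure M := lam.measure with hκ₀
  have open_apply : ∀ U : Set M, (hU : IsOpen U) → κ₀ U =
      ⨆ (K : TopologicalSpace.Compacts M) (_ : (K : Set M) ⊆ U), lamE K := by
    intro U hU
    rw [hκ₀, lam.measure_apply hU.measurableSet, lam.outerMeasure_of_isOpen U hU]
    simp only [Content.innerContent, lam_app]
    rfl
  have lam_univ : lamE ⟨univ, isCompact_univ⟩ = 1 := by
    refine le_antisymm ?_ ?_
    · refine (lam_le _ S₀ (by rw [hS₀univ]; exact subset_univ _)).trans ?_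
      rw [r_univ S₀ hS₀univ]; exact le_rfl
    · refine le_lam _ _ fun S hS => ?_
      rw [r_univ S (eq_univ_of_univ_subset hS)]; exact le_rfl
  have κ₀prob : IsProbabilityMeasure κ₀ := by
    constructor
    rw [open_apply univ isOpen_univ]
    refine le_antisymm (iSup₂_le fun K _ => lam_le_one K) ?_
    have h1 : lamE ⟨univ, isCompact_univ⟩ ≤ ⨆ (K : TopologicalSpace.Compacts M)
        (_ : (K : Set M) ⊆ univ), lamE K :=
      le_iSup₂ (f := fun (K : TopologicalSpace.Compacts M)
        (_ : (K : Set M) ⊆ univ) => lamE K) ⟨univ, isCompact_univ⟩ (by exact subset_univ _)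
    rw [lam_univ] at h1
    exact h1
  set κ : ProbabilityMeasure M := ⟨κ₀, κ₀prob⟩ with hκ
  -- liminf condition
  refine ⟨κ, φ, hφ, ?_⟩
  refine tendsto_of_forall_isOpen_le_liminf fun G hG => ?_
  have hbound : atTop.IsBoundedUnder (· ≥ ·) fun k => ρ (φ k) G :=
    ⟨0, Eventually.of_forall fun k => zero_le⟩
  have key : ∀ S : Finset ℕ, B S ⊆ G → (r S : ℝ≥0∞) ≤
      ((atTop.liminf fun k => ρ (φ k) G : ℝ≥0) : ℝ≥0∞) := by
    intro S hSG
    rw [ENNReal.coe_le_coe]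
    have h1 : r S = atTop.liminf fun k => ρ (φ k) (B S) := ((hrS S).liminf_eq).symm
    rw [h1]
    refine liminf_le_liminf (Eventually.of_forall fun k =>
      ProbabilityMeasure.apply_mono _ hSG)
      ⟨0, Eventually.of_forall fun k => zero_le⟩ ?_
    exact IsBoundedUnder.isCoboundedUnder_ge ⟨1, eventually_map.mpr
      (Eventually.of_forall fun k => ProbabilityMeasure.apply_le_one _ _)⟩
  have : (κ : Measure M) G ≤ ((atTop.liminf fun k => ρ (φ k) G : ℝ≥0) : ℝ≥0∞) := by
    show κ₀ G ≤ _
    rw [open_apply G hG]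
    refine iSup₂_le fun K hKG => ?_
    obtain ⟨S, hKS, hSG⟩ := covering K G K.2 hG hKG
    exact (lam_le K S hKS).trans (key S hSG)
  calc κ G = ((κ : Measure M) G).toNNReal := rfl
    _ ≤ _ := by
        rw [← ENNReal.toNNReal_coe (atTop.liminf fun k => ρ (φ k) G)]
        exact ENNReal.toNNReal_mono ENNReal.coe_ne_top this

lemma empiric_apply (f : M → M) (x : M) (n : ℕ) (s : Set M) :
    (empiric f x n : Measure M) s
      = ((n : ℝ≥0∞) + 1)⁻¹ * ∑ j ∈ Finset.range (n + 1), Measure.dirac (f^[j] x) s := by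
  show (((n : ℝ≥0∞) + 1)⁻¹ • ∑ j ∈ Finset.range (n + 1),
    Measure.dirac (f^[j] x) : Measure M) s = _
  rw [Measure.smul_apply, Measure.finset_sum_apply, smul_eq_mul]

lemma dirac_sum_le (f : M → M) (x : M) (n : ℕ) (s : Set M) :
    ∑ j ∈ Finset.range (n + 1), Measure.dirac (f^[j] x) s ≤ (n : ℝ≥0∞) + 1 := by
  calc ∑ j ∈ Finset.range (n + 1), Measure.dirac (f^[j] x) s
      ≤ ∑ _j ∈ Finset.range (n + 1), (1 : ℝ≥0∞) :=
        Finset.sum_le_sum fun j _ => prob_le_one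
    _ = (n : ℝ≥0∞) + 1 := by simp [Finset.sum_const, Finset.card_range]

lemma real_aux (x b : ℝ) (hx : 0 ≤ x) (hb0 : 0 ≤ b) (hb : b ≤ x + 1) :
    (x + 1)⁻¹ * b ≤ (x + 2)⁻¹ * b + (x + 2)⁻¹ := by
  have h1 : (0:ℝ) < x + 1 := by linarith
  have h2 : (0:ℝ) < x + 2 := by linarith
  rw [inv_mul_eq_div, div_le_iff₀ h1]
  have : ((x + 2)⁻¹ * b + (x + 2)⁻¹) = (b + 1) / (x + 2) := by
    field_simp
  rw [this, div_mul_eq_mul_div, le_div_iff₀ h2]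
  nlinarith

lemma nnreal_aux (x b : ℝ≥0) (hb : b ≤ x + 1) :
    (x + 1)⁻¹ * b ≤ (x + 2)⁻¹ * b + (x + 2)⁻¹ := by
  rw [← NNReal.coe_le_coe]
  push_cast
  exact real_aux x b x.coe_nonneg b.coe_nonneg (by exact_mod_cast hb)

lemma ennreal_aux (n : ℕ) (a : ℝ≥0∞) (ha : a ≤ (n : ℝ≥0∞) + 1) :
    ((n : ℝ≥0∞) + 1)⁻¹ * a ≤ ((n : ℝ≥0∞) + 2)⁻¹ * a + ((n : ℝ≥0∞) + 2)⁻¹ := by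
  have hatop : a ≠ ∞ := (ha.trans_lt (by simp [lt_top_iff_ne_top])).ne
  lift a to ℝ≥0 using hatop
  have h1 : ((n : ℝ≥0∞) + 1) = (((n : ℝ≥0) + 1 : ℝ≥0) : ℝ≥0∞) := by push_cast; rfl
  have h2 : ((n : ℝ≥0∞) + 2) = (((n : ℝ≥0) + 2 : ℝ≥0) : ℝ≥0∞) := by push_cast; rfl
  rw [h1, h2, ← ENNReal.coe_inv (by positivity), ← ENNReal.coe_inv (by positivity),
    ← ENNReal.coe_mul, ← ENNReal.coe_mul, ← ENNReal.coe_add, ENNReal.coe_le_coe]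
  refine nnreal_aux _ _ ?_
  rw [h1, ENNReal.coe_le_coe] at ha
  exact ha

lemma empiric_edist_succ (f : M → M) (x : M) (n : ℕ) :
    levyProkhorovEDist (empiric f x (n + 1) : Measure M) (empiric f x n : Measure M)
      ≤ ((n : ℝ≥0∞) + 2)⁻¹ := by
  have key : ∀ s : Set M,
      (empiric f x (n + 1) : Measure M) s ≤ (empiric f x n : Measure M) s + ((n : ℝ≥0∞) + 2)⁻¹
      ∧ (empiric f x n : Measure M) s ≤ (empiric f x (n + 1) : Measure M) s
        + ((n : ℝ≥0∞) + 2)⁻¹ := by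
    intro s
    rw [empiric_apply, empiric_apply]
    set a : ℝ≥0∞ := ∑ j ∈ Finset.range (n + 1), Measure.dirac (f^[j] x) s with ha
    have hsum : ∑ j ∈ Finset.range (n + 1 + 1), Measure.dirac (f^[j] x) s
        = a + Measure.dirac (f^[n+1] x) s := by
      rw [Finset.sum_range_succ]
    have hcast : ((n : ℝ≥0∞) + 1 + 1) = (n : ℝ≥0∞) + 2 := by ring
    rw [Nat.cast_add, Nat.cast_one, hcast, hsum]
    have hale : a ≤ (n : ℝ≥0∞) + 1 := dirac_sum_le f x n s
    constructor
    · calc ((n : ℝ≥0∞) + 2)⁻¹ * (a + Measure.dirac (f^[n+1] x) s)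
          ≤ ((n : ℝ≥0∞) + 2)⁻¹ * (a + 1) :=
            _root_.mul_le_mul_right (add_le_add_right prob_le_one a) _
        _ = ((n : ℝ≥0∞) + 2)⁻¹ * a + ((n : ℝ≥0∞) + 2)⁻¹ := by rw [mul_add, mul_one]
        _ ≤ ((n : ℝ≥0∞) + 1)⁻¹ * a + ((n : ℝ≥0∞) + 2)⁻¹ := by
            refine add_le_add_left (_root_.mul_le_mul_left ?_ a) _
            exact ENNReal.inv_le_inv.mpr (by gcongr; norm_num)
    · calc ((n : ℝ≥0∞) + 1)⁻¹ * a
          ≤ ((n : ℝ≥0∞) + 2)⁻¹ * a + ((n : ℝ≥0∞) + 2)⁻¹ := ennreal_aux n a hale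
        _ ≤ ((n : ℝ≥0∞) + 2)⁻¹ * (a + Measure.dirac (f^[n+1] x) s) + ((n : ℝ≥0∞) + 2)⁻¹ := by
            exact add_le_add_left (_root_.mul_le_mul_right (le_add_right le_rfl) _) _
  refine levyProkhorovEDist_le_of_forall _ _ _ fun ε B hδε hεtop _hB => ?_
  have hδ0 : (0 : ℝ≥0∞) < ((n : ℝ≥0∞) + 2)⁻¹ := by
    simp [ENNReal.inv_pos]
  have hε0 : ε ≠ 0 := (hδ0.trans hδε).ne'
  have hthick : B ⊆ Metric.thickening ε.toReal B :=
    Metric.self_subset_thickening (ENNReal.toReal_pos hε0 hεtop.ne) B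
  constructor
  · calc (empiric f x (n + 1) : Measure M) B
        ≤ (empiric f x n : Measure M) B + ((n : ℝ≥0∞) + 2)⁻¹ := (key B).1
      _ ≤ (empiric f x n : Measure M) (Metric.thickening ε.toReal B) + ε :=
          add_le_add (measure_mono hthick) hδε.le
  · calc (empiric f x n : Measure M) B
        ≤ (empiric f x (n + 1) : Measure M) B + ((n : ℝ≥0∞) + 2)⁻¹ := (key B).2
      _ ≤ (empiric f x (n + 1) : Measure M) (Metric.thickening ε.toReal B) + ε :=
          add_le_add (measure_mono hthick) hδε.le

lemma empiric_dist_succ (f : M → M) (x : M) (n : ℕ) :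
    levyProkhorovDist (empiric f x (n + 1) : Measure M) (empiric f x n : Measure M)
      ≤ 1 / ((n : ℝ) + 2) := by
  have h := empiric_edist_succ f x n
  have h2 : (((n : ℝ≥0∞) + 2)⁻¹).toReal = 1 / ((n : ℝ) + 2) := by
    rw [ENNReal.toReal_inv]
    simp [ENNReal.toReal_add]
  calc levyProkhorovDist (empiric f x (n + 1) : Measure M) (empiric f x n : Measure M)
      = (levyProkhorovEDist (empiric f x (n + 1) : Measure M)
          (empiric f x n : Measure M)).toReal := rfl
    _ ≤ (((n : ℝ≥0∞) + 2)⁻¹).toReal := ENNReal.toReal_mono (by simp) h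
    _ = 1 / ((n : ℝ) + 2) := h2

lemma probDist_eq_dist (ρ μ : ProbabilityMeasure M) :
    probDist ρ μ = dist (LevyProkhorov.ofMeasure ρ)
      (LevyProkhorov.ofMeasure μ) := rfl

lemma continuous_probDist (μ : ProbabilityMeasure M) :
    Continuous (fun ρ : ProbabilityMeasure M => probDist ρ μ) := by
  have : (fun ρ : ProbabilityMeasure M => probDist ρ μ)
      = fun ρ => dist (LevyProkhorov.probabilityMeasureHomeomorph ρ)
        (LevyProkhorov.probabilityMeasureHomeomorph μ) := rfl
  rw [this]
  exact (LevyProkhorov.probabilityMeasureHomeomorph.continuous).dist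
    continuous_const

lemma abs_probDist_sub_probDist_le (ρ₁ ρ₂ μ : ProbabilityMeasure M) :
    |probDist ρ₁ μ - probDist ρ₂ μ| ≤ levyProkhorovDist (ρ₁ : Measure M) (ρ₂ : Measure M) := by
  rw [probDist_eq_dist, probDist_eq_dist]
  exact abs_dist_sub_le _ _ _

lemma probDist_self (μ : ProbabilityMeasure M) : probDist μ μ = 0 :=
  levyProkhorovDist_self _

-- discrete IVT for real sequences
lemma exists_subseq_tendsto_of_crossing {h : ℕ → ℝ} {t : ℝ}
    (hstep : ∀ n, |h (n + 1) - h n| ≤ 1 / ((n : ℝ) + 2))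
    (hlow : ∀ N : ℕ, ∃ n ≥ N, h n < t) (hhigh : ∀ N : ℕ, ∃ n ≥ N, t < h n) :
    ∃ ψ : ℕ → ℕ, StrictMono ψ ∧ Tendsto (fun k => h (ψ k)) atTop (𝓝 t) := by
  have key : ∀ k N : ℕ, ∃ n, N ≤ n ∧ |h n - t| < 1 / ((k : ℝ) + 1) := by
    intro k N
    set ε : ℝ := 1 / ((k : ℝ) + 1) with hε
    have hε0 : 0 < ε := by positivity
    -- a threshold beyond which steps are < ε
    obtain ⟨Mk, hMk⟩ : ∃ Mk : ℕ, ∀ n ≥ Mk, 1 / ((n : ℝ) + 2) < ε := by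
      obtain ⟨Mk, hMk⟩ := exists_nat_gt (1 / ε)
      refine ⟨Mk, fun n hn => ?_⟩
      rw [div_lt_iff₀ (by positivity)]
      rw [div_lt_iff₀ hε0] at hMk
      have : (Mk : ℝ) ≤ n := by exact_mod_cast hn
      nlinarith
    obtain ⟨a, ha, hat⟩ := hlow (max N Mk)
    obtain ⟨b, hb, htb⟩ := hhigh a
    have hab : a ≤ b := hb
    have hPex : ∃ j, t ≤ h (a + j) := ⟨b - a, by rw [Nat.add_sub_cancel' hab]; exact htb.le⟩
    classical
    have hj₀spec : t ≤ h (a + Nat.find hPex) := Nat.find_spec hPex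
    have hj₀ne : Nat.find hPex ≠ 0 := by
      intro h0
      rw [h0, Nat.add_zero] at hj₀spec
      exact absurd hj₀spec (not_le.mpr hat)
    set m := a + (Nat.find hPex - 1) with hm
    have hm1 : m + 1 = a + Nat.find hPex := by omega
    have hprev : h m < t := by
      have := Nat.find_min hPex (m := Nat.find hPex - 1) (by omega)
      exact not_le.mp this
    refine ⟨m + 1, ?_, ?_⟩
    · have : N ≤ a := le_trans (le_max_left _ _) ha
      omega
    · have hstepm : |h (m + 1) - h m| < ε := by
        refine lt_of_le_of_lt (hstep m) (hMk m ?_)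
        have : Mk ≤ a := le_trans (le_max_right _ _) ha
        omega
      have h1 : t ≤ h (m + 1) := by rw [hm1]; exact hj₀spec
      rw [abs_sub_lt_iff]
      constructor
      · calc h (m + 1) - t ≤ h (m + 1) - h m := by linarith
          _ ≤ |h (m + 1) - h m| := le_abs_self _
          _ < ε := hstepm
      · linarith
  choose g hgN hgd using key
  set ψ : ℕ → ℕ := fun k => Nat.rec (g 0 0) (fun k ih => g (k + 1) (ih + 1)) k with hψ
  have hψsucc : ∀ k, ψ (k + 1) = g (k + 1) (ψ k + 1) := fun k => rfl
  have hψmono : StrictMono ψ := strictMono_nat_of_lt_succ fun k => by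
    have := hgN (k + 1) (ψ k + 1)
    rw [← hψsucc k] at this
    omega
  refine ⟨ψ, hψmono, ?_⟩
  have hbd : ∀ k, |h (ψ k) - t| ≤ 1 / ((k : ℝ) + 1) := by
    intro k
    cases k with
    | zero => exact (hgd 0 0).le
    | succ k => exact (hgd (k + 1) (ψ k + 1)).le
  rw [tendsto_iff_dist_tendsto_zero]
  refine squeeze_zero (g := fun k : ℕ => 1 / ((k : ℝ) + 1)) (fun k => dist_nonneg)
    (fun k => (le_of_eq (Real.dist_eq _ _)).trans (hbd k))
    tendsto_one_div_add_atTop_nhds_zero_nat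

end AuxiliaryLemmas

/-- **Convex-like property of `pω(x)`.** For every `x ∈ M`, if `μ, ν ∈ pω(x)` and
`0 ≤ λ ≤ 1`, then there exists `μ_λ ∈ pω(x)` with `dist(μ_λ, μ) = λ · dist(ν, μ)`. -/
theorem pomega_convex_like (f : M → M) (hf : Continuous f) (x : M)
    (μ ν : ProbabilityMeasure M) (hμ : μ ∈ pomega f x) (hν : ν ∈ pomega f x)
    (lam : ℝ) (hlam : lam ∈ Set.Icc (0 : ℝ) 1) :
    ∃ μlam ∈ pomega f x, probDist μlam μ = lam * probDist ν μ := by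
  obtain ⟨hlam0, hlam1⟩ := hlam
  set d := probDist ν μ with hd
  have hd0 : 0 ≤ d := ENNReal.toReal_nonneg
  set t := lam * d with ht
  have ht0 : 0 ≤ t := mul_nonneg hlam0 hd0
  have htd : t ≤ d := by nlinarith
  rcases eq_or_lt_of_le ht0 with h0 | h0
  · exact ⟨μ, hμ, by rw [probDist_self, ← h0]⟩
  rcases eq_or_lt_of_le htd with h1 | h1
  · exact ⟨ν, hν, h1.symm⟩
  -- now `0 < t < d`
  set h : ℕ → ℝ := fun n => probDist (empiric f x n) μ with hh
  have hstep : ∀ n, |h (n + 1) - h n| ≤ 1 / ((n : ℝ) + 2) := fun n =>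
    (abs_probDist_sub_probDist_le _ _ _).trans (empiric_dist_succ f x n)
  obtain ⟨φ1, hφ1, hten1⟩ := hμ
  obtain ⟨φ2, hφ2, hten2⟩ := hν
  have hc := continuous_probDist (M := M) μ
  have hten1' : Tendsto (fun k => h (φ1 k)) atTop (𝓝 (probDist μ μ)) :=
    (hc.tendsto μ).comp hten1
  rw [probDist_self μ] at hten1'
  have hten2' : Tendsto (fun k => h (φ2 k)) atTop (𝓝 d) := (hc.tendsto ν).comp hten2
  have hlow : ∀ N : ℕ, ∃ n ≥ N, h n < t := by
    intro N
    have e1 : ∀ᶠ k in atTop, h (φ1 k) < t := hten1'.eventually_lt_const h0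
    have e2 : ∀ᶠ k in atTop, N ≤ φ1 k := hφ1.tendsto_atTop.eventually_ge_atTop N
    obtain ⟨k, hk1, hk2⟩ := (e1.and e2).exists
    exact ⟨φ1 k, hk2, hk1⟩
  have hhigh : ∀ N : ℕ, ∃ n ≥ N, t < h n := by
    intro N
    have e1 : ∀ᶠ k in atTop, t < h (φ2 k) := hten2'.eventually_const_lt h1
    have e2 : ∀ᶠ k in atTop, N ≤ φ2 k := hφ2.tendsto_atTop.eventually_ge_atTop N
    obtain ⟨k, hk1, hk2⟩ := (e1.and e2).exists
    exact ⟨φ2 k, hk2, hk1⟩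
  obtain ⟨ψ, hψ, htenψ⟩ := exists_subseq_tendsto_of_crossing hstep hlow hhigh
  obtain ⟨κ, φ3, hφ3, hten3⟩ := probabilityMeasure_tendsto_subseq (fun k => empiric f x (ψ k))
  refine ⟨κ, ⟨ψ ∘ φ3, hψ.comp hφ3, hten3⟩, ?_⟩
  have ha : Tendsto (fun k => h (ψ (φ3 k))) atTop (𝓝 (probDist κ μ)) :=
    (hc.tendsto κ).comp hten3
  have hb : Tendsto (fun k => h (ψ (φ3 k))) atTop (𝓝 t) :=
    htenψ.comp hφ3.tendsto_atTop
  exact tendsto_nhds_unique ha hb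
end

section
/- For every x ∈ M, the set pω(x) of limits of convergent subsequences of the empiric probabilities either consists of a single element or is uncountable. -/
open MeasureTheory Filter Topology ENNReal NNReal
open TopologicalSpace BoundedContinuousFunction

variable {M : Type*} [MetricSpace M] [CompactSpace M] [MeasurableSpace M] [BorelSpace M]

lemma probSC_abs_integral_le (μ : ProbabilityMeasure M) (f : M →ᵇ ℝ) :
    |∫ z, f z ∂(μ : Measure M)| ≤ ‖f‖ := by
  simpa [Real.norm_eq_abs] using BoundedContinuousFunction.norm_integral_le_norm (μ : Measure M) f

/-- Sequential compactness of the space of Borel probability measures on a compact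
metric space. -/
lemma probSeqCompact [Nonempty M] (μs : ℕ → ProbabilityMeasure M) :
    ∃ φ : ℕ → ℕ, StrictMono φ ∧ ∃ ν : ProbabilityMeasure M,
      Tendsto (fun k => μs (φ k)) atTop (𝓝 ν) := by
  obtain ⟨g, hg⟩ := TopologicalSpace.exists_dense_seq C(M, ℝ)
  set y : ℕ → ℕ → ℝ := fun n i => ∫ z, g i z ∂(μs n : Measure M) with hy
  have hmem : ∀ n, y n ∈ Set.pi Set.univ (fun i => Set.Icc (-‖g i‖) ‖g i‖) := by
    intro n i _
    have h := probSC_abs_integral_le (μs n) (mkOfCompact (g i))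
    rw [norm_mkOfCompact, abs_le] at h
    simpa using h
  have hcpt : IsCompact (Set.pi Set.univ fun i => Set.Icc (-‖g i‖) ‖g i‖) :=
    isCompact_univ_pi fun i => isCompact_Icc
  obtain ⟨l, -, φ, hφ, hconv⟩ := hcpt.isSeqCompact hmem
  have hconv' : ∀ i, Tendsto (fun k => y (φ k) i) atTop (𝓝 (l i)) := by
    rw [tendsto_pi_nhds] at hconv
    exact hconv
  -- the integrals of every bounded continuous function converge along the subsequence
  have key : ∀ f : M →ᵇ ℝ, ∃ L : ℝ,
      Tendsto (fun k => ∫ z, f z ∂(μs (φ k) : Measure M)) atTop (𝓝 L) := by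
    intro f
    refine cauchySeq_tendsto_of_complete ?_
    rw [Metric.cauchySeq_iff]
    intro ε hε
    obtain ⟨i, hi⟩ : ∃ i, dist f (mkOfCompact (g i)) < ε / 3 := by
      obtain ⟨i, hi⟩ := Metric.denseRange_iff.mp hg f.toContinuousMap (ε / 3) (by positivity)
      refine ⟨i, ?_⟩
      have hf : mkOfCompact f.toContinuousMap = f := by ext z; rfl
      rw [← hf, dist_mkOfCompact]
      exact hi
    have hbd : ∀ k, |∫ z, f z ∂(μs (φ k) : Measure M) - y (φ k) i| < ε / 3 := by
      intro k
      have h1 : ∫ z, f z ∂(μs (φ k) : Measure M) - y (φ k) i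
          = ∫ z, (f - mkOfCompact (g i)) z ∂(μs (φ k) : Measure M) := by
        rw [hy]
        simp only [BoundedContinuousFunction.coe_sub, Pi.sub_apply]
        rw [integral_sub (f.integrable _) ((mkOfCompact (g i)).integrable _)]
        simp
      rw [h1]
      refine lt_of_le_of_lt (probSC_abs_integral_le _ _) ?_
      rwa [← dist_eq_norm]
    have hC : CauchySeq fun k => y (φ k) i := (hconv' i).cauchySeq
    rw [Metric.cauchySeq_iff] at hC
    obtain ⟨N, hN⟩ := hC (ε / 3) (by positivity)
    refine ⟨N, fun m hm n hn => ?_⟩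
    have t := dist_triangle4 (∫ z, f z ∂(μs (φ m) : Measure M)) (y (φ m) i) (y (φ n) i)
      (∫ z, f z ∂(μs (φ n) : Measure M))
    have h2 : dist (∫ z, f z ∂(μs (φ m) : Measure M)) (y (φ m) i) < ε / 3 := by
      rw [Real.dist_eq]; exact hbd m
    have h3 : dist (y (φ n) i) (∫ z, f z ∂(μs (φ n) : Measure M)) < ε / 3 := by
      rw [Real.dist_eq, abs_sub_comm]; exact hbd n
    have h4 := hN m hm n hn
    calc dist (∫ z, f z ∂(μs (φ m) : Measure M)) (∫ z, f z ∂(μs (φ n) : Measure M)) ≤ _ := t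
      _ < ε := by linarith
  choose Λ hΛ using key
  have Λ_nonneg : ∀ f : M →ᵇ ℝ, (∀ z, 0 ≤ f z) → 0 ≤ Λ f := fun f hfn =>
    ge_of_tendsto (hΛ f) (Eventually.of_forall fun k => integral_nonneg fun z => hfn z)
  have Λ_mono : ∀ f h : M →ᵇ ℝ, (∀ z, f z ≤ h z) → Λ f ≤ Λ h := fun f h hfh =>
    le_of_tendsto_of_tendsto (hΛ f) (hΛ h) (Eventually.of_forall fun k =>
      integral_mono (f.integrable _) (h.integrable _) hfh)
  have Λ_add : ∀ f h : M →ᵇ ℝ, Λ (f + h) = Λ f + Λ h := by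
    intro f h
    refine tendsto_nhds_unique (hΛ (f + h)) (((hΛ f).add (hΛ h)).congr fun k => ?_)
    rw [← integral_add (f.integrable _) (h.integrable _)]
    simp
  have Λ_one : Λ (1 : M →ᵇ ℝ) = 1 := by
    refine tendsto_nhds_unique (hΛ 1) ?_
    have : ∀ k, ∫ z, (1 : M →ᵇ ℝ) z ∂(μs (φ k) : Measure M) = 1 := by
      intro k; simp
    simp only [this]
    exact tendsto_const_nhds
  -- the Riesz content associated with Λ
  set F : Set M → Set (M →ᵇ ℝ) := fun K => {f | (∀ z, 0 ≤ f z) ∧ ∀ z ∈ K, 1 ≤ f z} with hF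
  have F_one : ∀ K, (1 : M →ᵇ ℝ) ∈ F K := fun K => ⟨fun z => by simp, fun z _ => by simp⟩
  have hbdd : ∀ K, BddBelow (Λ '' F K) := fun K =>
    ⟨0, by rintro r ⟨f, hf, rfl⟩; exact Λ_nonneg f hf.1⟩
  have hne : ∀ K, (Λ '' F K).Nonempty := fun K => ⟨Λ 1, 1, F_one K, rfl⟩
  set lam : Set M → ℝ := fun K => sInf (Λ '' F K) with hlam
  have lam_nonneg : ∀ K, 0 ≤ lam K := fun K =>
    le_csInf (hne K) (by rintro r ⟨f, hf, rfl⟩; exact Λ_nonneg f hf.1)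
  have lam_mono : ∀ K₁ K₂ : Set M, K₁ ⊆ K₂ → lam K₁ ≤ lam K₂ := fun K₁ K₂ h =>
    csInf_le_csInf (hbdd K₁) (hne K₂)
      (by rintro r ⟨f, hf, rfl⟩; exact ⟨f, ⟨hf.1, fun z hz => hf.2 z (h hz)⟩, rfl⟩)
  have lam_le : ∀ (K : Set M) (f : M →ᵇ ℝ), f ∈ F K → lam K ≤ Λ f := fun K f hf =>
    csInf_le (hbdd K) ⟨f, hf, rfl⟩
  have lam_subadd : ∀ K₁ K₂ : Set M, lam (K₁ ∪ K₂) ≤ lam K₁ + lam K₂ := by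
    intro K₁ K₂
    refine le_of_forall_pos_le_add fun ε hε => ?_
    obtain ⟨r₁, hr₁mem, hr₁⟩ := exists_lt_of_csInf_lt (hne K₁)
      (lt_add_of_pos_right (lam K₁) (half_pos hε))
    obtain ⟨r₂, hr₂mem, hr₂⟩ := exists_lt_of_csInf_lt (hne K₂)
      (lt_add_of_pos_right (lam K₂) (half_pos hε))
    obtain ⟨f₁, hf₁, rfl⟩ := hr₁mem
    obtain ⟨f₂, hf₂, rfl⟩ := hr₂mem
    have hmem12 : f₁ + f₂ ∈ F (K₁ ∪ K₂) := by
      refine ⟨fun z => add_nonneg (hf₁.1 z) (hf₂.1 z), fun z hz => ?_⟩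
      rcases hz with hz | hz
      · have := hf₁.2 z hz
        have h2 := hf₂.1 z
        simp only [BoundedContinuousFunction.coe_add, Pi.add_apply]
        linarith
      · have := hf₂.2 z hz
        have h2 := hf₁.1 z
        simp only [BoundedContinuousFunction.coe_add, Pi.add_apply]
        linarith
    have := lam_le _ _ hmem12
    rw [Λ_add] at this
    linarith
  have lam_superadd : ∀ K₁ K₂ : Set M, IsCompact K₁ → IsCompact K₂ → Disjoint K₁ K₂ →
      lam K₁ + lam K₂ ≤ lam (K₁ ∪ K₂) := by
    intro K₁ K₂ hc₁ hc₂ hd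
    obtain ⟨u, hu0, hu1, hucc⟩ := exists_continuous_zero_one_of_isCompact hc₁ hc₂.isClosed hd
    set χ : M →ᵇ ℝ := mkOfCompact u with hχ
    refine le_csInf (hne _) ?_
    rintro r ⟨f, ⟨hf0, hf1⟩, rfl⟩
    have hmem₁ : f * ((1 : M →ᵇ ℝ) - χ) ∈ F K₁ := by
      constructor
      · intro z
        have := (hucc z).2
        have h0 := hf0 z
        simp only [BoundedContinuousFunction.coe_mul, Pi.mul_apply,
          BoundedContinuousFunction.coe_sub, BoundedContinuousFunction.coe_one, Pi.sub_apply,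
          Pi.one_apply]
        have hcz : χ z = u z := rfl
        rw [hcz]
        nlinarith [hf0 z, (hucc z).2]
      · intro z hz
        have hz0 : u z = 0 := hu0 hz
        have := hf1 z (Or.inl hz)
        simp only [BoundedContinuousFunction.coe_mul, Pi.mul_apply,
          BoundedContinuousFunction.coe_sub, BoundedContinuousFunction.coe_one, Pi.sub_apply,
          Pi.one_apply] at *
        have hcz : (mkOfCompact u) z = u z := rfl
        rw [hcz, hz0]
        linarith
    have hmem₂ : f * χ ∈ F K₂ := by
      constructor
      · intro z
        simp only [BoundedContinuousFunction.coe_mul, Pi.mul_apply]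
        exact mul_nonneg (hf0 z) (by simpa [hχ] using (hucc z).1)
      · intro z hz
        have hz1 : u z = 1 := hu1 hz
        have := hf1 z (Or.inr hz)
        simp only [BoundedContinuousFunction.coe_mul, Pi.mul_apply] at *
        have hcz : (mkOfCompact u) z = u z := rfl
        rw [hcz, hz1]
        linarith
    have hsum : f * ((1 : M →ᵇ ℝ) - χ) + f * χ = f := by
      ext z; simp; ring
    calc lam K₁ + lam K₂ ≤ Λ (f * ((1 : M →ᵇ ℝ) - χ)) + Λ (f * χ) :=
          add_le_add (lam_le _ _ hmem₁) (lam_le _ _ hmem₂)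
      _ = Λ f := by rw [← Λ_add, hsum]
  set C : MeasureTheory.Content M := {
    toFun := fun K => Real.toNNReal (lam K)
    mono' := fun K₁ K₂ h => Real.toNNReal_mono (lam_mono _ _ h)
    sup_disjoint' := by
      intro K₁ K₂ hd h₁ h₂
      have heq : lam (↑K₁ ∪ ↑K₂) = lam ↑K₁ + lam ↑K₂ :=
        le_antisymm (lam_subadd _ _) (lam_superadd _ _ K₁.2 K₂.2 hd)
      show (lam ((K₁ : Set M) ∪ (K₂ : Set M))).toNNReal
          = (lam (K₁ : Set M)).toNNReal + (lam (K₂ : Set M)).toNNReal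
      rw [heq, Real.toNNReal_add (lam_nonneg _) (lam_nonneg _)]
    sup_le' := by
      intro K₁ K₂
      show (lam ((K₁ : Set M) ∪ (K₂ : Set M))).toNNReal
          ≤ (lam (K₁ : Set M)).toNNReal + (lam (K₂ : Set M)).toNNReal
      calc Real.toNNReal (lam (↑K₁ ∪ ↑K₂)) ≤ Real.toNNReal (lam ↑K₁ + lam ↑K₂) :=
            Real.toNNReal_mono (lam_subadd _ _)
        _ = _ := Real.toNNReal_add (lam_nonneg _) (lam_nonneg _) } with hC
  have lam_univ : lam Set.univ = 1 := by
    refine le_antisymm (by simpa [Λ_one] using lam_le Set.univ 1 (F_one _)) ?_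
    refine le_csInf (hne _) ?_
    rintro r ⟨f, ⟨hf0, hf1⟩, rfl⟩
    have : ∀ z, (1 : M →ᵇ ℝ) z ≤ f z := fun z => by simpa using hf1 z trivial
    simpa [Λ_one] using Λ_mono 1 f this
  have hCuniv : ∀ K : TopologicalSpace.Compacts M, (C K : ℝ≥0∞) ≤ 1 := by
    intro K
    have h1 : C.toFun K ≤ 1 := by
      rw [hC]
      simp only
      calc Real.toNNReal (lam ↑K) ≤ Real.toNNReal (lam Set.univ) :=
            Real.toNNReal_mono (lam_mono _ _ (Set.subset_univ _))
        _ = 1 := by rw [lam_univ]; simp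
    show ((C.toFun K : ℝ≥0) : ℝ≥0∞) ≤ 1
    exact_mod_cast h1
  have hprob : C.measure Set.univ = 1 := by
    rw [C.measure_apply MeasurableSet.univ, C.outerMeasure_of_isOpen _ isOpen_univ]
    refine le_antisymm ?_ ?_
    · rw [MeasureTheory.Content.innerContent]
      refine iSup_le fun K => iSup_le fun _ => hCuniv K
    · refine le_trans ?_
        (C.le_innerContent ⟨Set.univ, isCompact_univ⟩ ⟨Set.univ, isOpen_univ⟩ (subset_rfl))
      have : (1 : ℝ≥0) ≤ C.toFun ⟨Set.univ, isCompact_univ⟩ := by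
        rw [hC]
        simp only
        rw [TopologicalSpace.Compacts.coe_mk, lam_univ]
        simp
      show (1 : ℝ≥0∞) ≤ ((C.toFun ⟨Set.univ, isCompact_univ⟩ : ℝ≥0) : ℝ≥0∞)
      exact_mod_cast this
  let ν : ProbabilityMeasure M := ⟨C.measure, ⟨hprob⟩⟩
  refine ⟨φ, hφ, ν, ?_⟩
  apply MeasureTheory.tendsto_of_forall_isOpen_le_liminf
  intro G hG
  -- first, the `ℝ≥0∞`-level inequality
  have main : C.measure G ≤ liminf (fun k => ((μs (φ k) : Measure M) G)) atTop := by
    rw [C.measure_apply hG.measurableSet, C.outerMeasure_of_isOpen _ hG,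
      MeasureTheory.Content.innerContent]
    refine iSup_le fun K => iSup_le fun hK => ?_
    have hdisj : Disjoint (K : Set M) Gᶜ :=
      Set.disjoint_left.mpr fun z hz hzc => hzc (hK hz)
    obtain ⟨u, hu0, hu1, hucc⟩ :=
      exists_continuous_zero_one_of_isCompact K.2 hG.isClosed_compl hdisj
    set χ : M →ᵇ ℝ := (1 : M →ᵇ ℝ) - mkOfCompact u with hχ
    have hχmem : χ ∈ F (K : Set M) := by
      constructor
      · intro z
        have : (mkOfCompact u) z = u z := rfl
        simp only [hχ, BoundedContinuousFunction.coe_sub, BoundedContinuousFunction.coe_one,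
          Pi.sub_apply, Pi.one_apply, this]
        linarith [(hucc z).2]
      · intro z hz
        have h0 : u z = 0 := hu0 hz
        have : (mkOfCompact u) z = u z := rfl
        simp only [hχ, BoundedContinuousFunction.coe_sub, BoundedContinuousFunction.coe_one,
          Pi.sub_apply, Pi.one_apply, this, h0]
        norm_num
    have hle : ∀ μ : ProbabilityMeasure M,
        ∫ z, χ z ∂(μ : Measure M) ≤ ((μ : Measure M) G).toReal := by
      intro μ
      have hpt : ∀ z, χ z ≤ G.indicator (fun _ => (1 : ℝ)) z := by
        intro z
        by_cases hz : z ∈ G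
        · have : (mkOfCompact u) z = u z := rfl
          simp only [Set.indicator_of_mem hz, hχ, BoundedContinuousFunction.coe_sub,
            BoundedContinuousFunction.coe_one, Pi.sub_apply, Pi.one_apply, this]
          linarith [(hucc z).1]
        · have h1 : u z = 1 := hu1 hz
          have : (mkOfCompact u) z = u z := rfl
          simp only [Set.indicator_of_notMem hz, hχ, BoundedContinuousFunction.coe_sub,
            BoundedContinuousFunction.coe_one, Pi.sub_apply, Pi.one_apply, this, h1]
          norm_num
      calc ∫ z, χ z ∂(μ : Measure M) ≤ ∫ z, G.indicator (fun _ => (1 : ℝ)) z ∂(μ : Measure M) :=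
            integral_mono (χ.integrable _)
              ((integrable_const (1 : ℝ)).indicator hG.measurableSet) hpt
        _ = ((μ : Measure M) G).toReal := by
            rw [integral_indicator_const _ hG.measurableSet]; simp; rfl
    have t1 : Tendsto (fun k => ENNReal.ofReal (∫ z, χ z ∂(μs (φ k) : Measure M))) atTop
        (𝓝 (ENNReal.ofReal (Λ χ))) := (ENNReal.continuous_ofReal.tendsto _).comp (hΛ χ)
    have h1 : ENNReal.ofReal (Λ χ) ≤ liminf (fun k => ((μs (φ k) : Measure M) G)) atTop := by
      rw [← t1.liminf_eq]
      refine liminf_le_liminf (Eventually.of_forall fun k => ?_)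
      calc ENNReal.ofReal (∫ z, χ z ∂(μs (φ k) : Measure M))
          ≤ ENNReal.ofReal (((μs (φ k) : Measure M) G).toReal) :=
            ENNReal.ofReal_le_ofReal (hle _)
        _ = (μs (φ k) : Measure M) G := ENNReal.ofReal_toReal (measure_ne_top _ _)
    refine le_trans ?_ h1
    have h2 : lam (K : Set M) ≤ Λ χ := lam_le _ _ hχmem
    have h3 : C.toFun K ≤ Real.toNNReal (Λ χ) := Real.toNNReal_mono h2
    show ((C.toFun K : ℝ≥0) : ℝ≥0∞) ≤ _
    calc ((C.toFun K : ℝ≥0) : ℝ≥0∞) ≤ (Real.toNNReal (Λ χ) : ℝ≥0∞) := by exact_mod_cast h3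
      _ = ENNReal.ofReal (Λ χ) := rfl
  -- convert to the `ℝ≥0` inequality
  have aux : (ENNReal.ofNNReal (liminf (fun k => μs (φ k) G) atTop)) =
      liminf (fun k => ((μs (φ k) G : ℝ≥0) : ℝ≥0∞)) atTop := by
    refine Monotone.map_liminf_of_continuousAt (F := atTop) ENNReal.coe_mono
      (fun k => μs (φ k) G) ENNReal.continuous_coe.continuousAt
      (Filter.IsBoundedUnder.isCoboundedUnder_ge ⟨1, by simp⟩) ⟨0, by simp⟩
  rw [← ENNReal.coe_le_coe, aux]
  have hsimp : (fun k => ((μs (φ k) G : ℝ≥0) : ℝ≥0∞)) = fun k => (μs (φ k) : Measure M) G := by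
    funext k
    exact ProbabilityMeasure.ennreal_coeFn_eq_coeFn_toMeasure _ _
  rw [hsimp]
  have lhs : ((ν G : ℝ≥0) : ℝ≥0∞) = C.measure G :=
    ProbabilityMeasure.ennreal_coeFn_eq_coeFn_toMeasure ν G
  rw [lhs]
  exact main

lemma crossing {a : ℕ → ℝ} (hd : Tendsto (fun n => a (n + 1) - a n) atTop (𝓝 0))
    {p q c : ℝ} (hp : MapClusterPt p atTop a) (hq : MapClusterPt q atTop a)
    (hpc : p < c) (hcq : c < q) : MapClusterPt c atTop a := by
  rw [mapClusterPt_iff_frequently] at *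
  intro s hs
  obtain ⟨ε, hε, hball⟩ := Metric.mem_nhds_iff.mp hs
  have hfreq : ∃ᶠ n in atTop, a n ∈ Metric.ball c ε := by
    rw [frequently_atTop]
    intro N
    obtain ⟨N₀, hN₀⟩ := Metric.tendsto_atTop.mp hd ε hε
    have hfp : ∃ᶠ n in atTop, a n ∈ Metric.ball p (c - p) :=
      hp _ (Metric.ball_mem_nhds _ (by linarith))
    obtain ⟨n₁, hn₁N, hn₁⟩ := frequently_atTop.mp hfp (max N N₀)
    have han₁ : a n₁ < c := by
      rw [Metric.mem_ball, Real.dist_eq, abs_lt] at hn₁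
      linarith [hn₁.2]
    have hfq : ∃ᶠ n in atTop, a n ∈ Metric.ball q (q - c) :=
      hq _ (Metric.ball_mem_nhds _ (by linarith))
    obtain ⟨n₂, hn₂N, hn₂⟩ := frequently_atTop.mp hfq (n₁ + 1)
    have han₂ : c ≤ a n₂ := by
      rw [Metric.mem_ball, Real.dist_eq, abs_lt] at hn₂
      linarith [hn₂.1]
    have hex : ∃ k, c ≤ a (n₁ + k + 1) := ⟨n₂ - n₁ - 1, by
      have : n₁ + (n₂ - n₁ - 1) + 1 = n₂ := by omega
      rw [this]; exact han₂⟩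
    set k₀ := Nat.find hex with hk₀def
    have hk₀ : c ≤ a (n₁ + k₀ + 1) := Nat.find_spec hex
    have hprev : a (n₁ + k₀) < c := by
      rcases Nat.eq_zero_or_pos k₀ with h0 | h0
      · rw [h0]; simpa using han₁
      · have := Nat.find_min hex (show k₀ - 1 < k₀ by omega)
        have heq : n₁ + (k₀ - 1) + 1 = n₁ + k₀ := by omega
        rw [heq] at this
        linarith [lt_of_not_ge this]
    have hdiff : |a (n₁ + k₀ + 1) - a (n₁ + k₀)| < ε := by
      have h := hN₀ (n₁ + k₀) (le_trans (le_trans (le_max_right N N₀) hn₁N) (Nat.le_add_right _ _))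
      simpa [Real.dist_eq] using h
    refine ⟨n₁ + k₀ + 1, by
      have := le_trans (le_max_left N N₀) hn₁N; omega, ?_⟩
    rw [Metric.mem_ball, Real.dist_eq, abs_lt]
    rw [abs_lt] at hdiff
    constructor <;> linarith [hdiff.1, hdiff.2]
  exact hfreq.mono fun n hn => hball hn

/-- For every `x ∈ M`, the limit set `pω(x)` either consists of a single element or is
uncountable. -/
theorem pomega_singleton_or_uncountable (f : M → M) (hf : Continuous f) (x : M) :
    (∃! μ : ProbabilityMeasure M, μ ∈ pomega f x) ∨ ¬ (pomega f x).Countable := by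
  have : Nonempty M := ⟨x⟩
  set e : ℕ → ProbabilityMeasure M := empiric f x with he
  obtain ⟨φ₀, hφ₀, ν₀, hν₀⟩ := probSeqCompact e
  have hν₀mem : ν₀ ∈ pomega f x := ⟨φ₀, hφ₀, hν₀⟩
  by_cases huniq : ∀ μ ∈ pomega f x, ∀ ν ∈ pomega f x, μ = ν
  · exact Or.inl ⟨ν₀, hν₀mem, fun μ hμ => huniq μ hμ ν₀ hν₀mem⟩
  right
  push_neg at huniq
  obtain ⟨μ₁, hμ₁, μ₂, hμ₂, hμne⟩ := huniq
  -- a separating bounded continuous function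
  obtain ⟨f₀, hI⟩ : ∃ f₀ : M →ᵇ ℝ,
      ∫ z, f₀ z ∂(μ₁ : Measure M) ≠ ∫ z, f₀ z ∂(μ₂ : Measure M) := by
    by_contra hcon
    push_neg at hcon
    refine hμne ?_
    have h1 : Tendsto (fun _ : ℕ => μ₁) atTop (𝓝 μ₂) := by
      rw [ProbabilityMeasure.tendsto_iff_forall_integral_tendsto]
      intro f₁
      simp only [hcon f₁]
      exact tendsto_const_nhds
    exact tendsto_nhds_unique tendsto_const_nhds h1
  set a : ℕ → ℝ := fun n => ∫ z, f₀ z ∂(e n : Measure M) with ha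
  set I₁ : ℝ := ∫ z, f₀ z ∂(μ₁ : Measure M) with hI₁
  set I₂ : ℝ := ∫ z, f₀ z ∂(μ₂ : Measure M) with hI₂
  -- integrals of `f₀` against elements of `pomega` are cluster values of `a`
  have hclus : ∀ μ ∈ pomega f x, MapClusterPt (∫ z, f₀ z ∂(μ : Measure M)) atTop a := by
    rintro μ ⟨ψ, hψ, htend⟩
    refine MapClusterPt.of_comp (hψ.tendsto_atTop) ?_
    exact (((ProbabilityMeasure.tendsto_iff_forall_integral_tendsto).mp htend) f₀).mapClusterPt
  -- a formula for `a`
  have haf : ∀ n, a n = ((n : ℝ) + 1)⁻¹ * ∑ j ∈ Finset.range (n + 1), f₀ (f^[j] x) := by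
    intro n
    rw [ha]
    simp only [he]
    have hcoe : ((empiric f x n : ProbabilityMeasure M) : Measure M)
        = ((n : ℝ≥0∞) + 1)⁻¹ • ∑ j ∈ Finset.range (n + 1),
            MeasureTheory.Measure.dirac (f^[j] x) := rfl
    rw [hcoe, integral_smul_measure, integral_finset_sum_measure
      (fun j _ => f₀.integrable _)]
    have h1 : ∀ j ∈ Finset.range (n + 1),
        ∫ z, f₀ z ∂(MeasureTheory.Measure.dirac (f^[j] x)) = f₀ (f^[j] x) := fun j _ =>
      integral_dirac _ _
    rw [Finset.sum_congr rfl h1]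
    have h2 : (((n : ℝ≥0∞) + 1)⁻¹).toReal = ((n : ℝ) + 1)⁻¹ := by
      rw [ENNReal.toReal_inv, ENNReal.toReal_add (by simp) (by simp)]
      simp
    rw [h2, smul_eq_mul]
  have habs : ∀ n, |a n| ≤ ‖f₀‖ := fun n => probSC_abs_integral_le (e n) f₀
  -- consecutive differences tend to zero
  have hstep : ∀ n : ℕ, a (n + 1) - a n = (f₀ (f^[n + 1] x) - a n) / ((n : ℝ) + 2) := by
    intro n
    have h1 := haf n
    have h2 := haf (n + 1)
    rw [Finset.sum_range_succ] at h2
    have hS : ∑ j ∈ Finset.range (n + 1), f₀ (f^[j] x) = ((n : ℝ) + 1) * a n := by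
      rw [h1]; field_simp
    rw [hS] at h2
    have hn1 : ((n : ℝ) + 1) ≠ 0 := by positivity
    have hn2 : ((n : ℝ) + 2) ≠ 0 := by positivity
    rw [h2]
    push_cast
    field_simp
    ring
  have hd : Tendsto (fun n => a (n + 1) - a n) atTop (𝓝 0) := by
    have hlim : Tendsto (fun n : ℕ => 2 * ‖f₀‖ / ((n : ℝ) + 2)) atTop (𝓝 0) := by
      have h := tendsto_const_div_atTop_nhds_zero_nat (2 * ‖f₀‖)
      have h2 := h.comp (tendsto_add_atTop_nat 2)
      refine h2.congr fun n => ?_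
      simp only [Function.comp_apply]
      push_cast
      ring_nf
    refine squeeze_zero_norm (fun n => ?_) hlim
    rw [hstep n, Real.norm_eq_abs, abs_div, abs_of_pos (by positivity : (0:ℝ) < (n:ℝ) + 2)]
    have h3 : |f₀ (f^[n + 1] x) - a n| ≤ 2 * ‖f₀‖ := by
      have h4 : |f₀ (f^[n + 1] x)| ≤ ‖f₀‖ := by
        have := f₀.norm_coe_le_norm (f^[n + 1] x)
        rwa [Real.norm_eq_abs] at this
      have h5 := habs n
      calc |f₀ (f^[n + 1] x) - a n| ≤ |f₀ (f^[n + 1] x)| + |a n| := abs_sub _ _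
        _ ≤ 2 * ‖f₀‖ := by linarith
    exact (div_le_div_iff_of_pos_right (by positivity : (0:ℝ) < (n:ℝ) + 2)).mpr h3
  -- the two cluster values
  have hp : MapClusterPt (min I₁ I₂) atTop a := by
    rcases le_total I₁ I₂ with h | h
    · rw [min_eq_left h]; exact hclus μ₁ hμ₁
    · rw [min_eq_right h]; exact hclus μ₂ hμ₂
  have hq : MapClusterPt (max I₁ I₂) atTop a := by
    rcases le_total I₁ I₂ with h | h
    · rw [max_eq_right h]; exact hclus μ₂ hμ₂
    · rw [max_eq_left h]; exact hclus μ₁ hμ₁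
  have hlt : min I₁ I₂ < max I₁ I₂ := min_lt_max.mpr hI
  -- every intermediate value is attained on `pomega`
  have key : ∀ c, min I₁ I₂ < c → c < max I₁ I₂ →
      ∃ ρ ∈ pomega f x, ∫ z, f₀ z ∂(ρ : Measure M) = c := by
    intro c hc1 hc2
    have hcc : MapClusterPt c atTop a := crossing hd hp hq hc1 hc2
    obtain ⟨ψ, hψ, hψc⟩ := TopologicalSpace.FirstCountableTopology.tendsto_subseq hcc
    obtain ⟨ψ₂, hψ₂, ρ, hρ⟩ := probSeqCompact (fun k => e (ψ k))
    refine ⟨ρ, ⟨ψ ∘ ψ₂, hψ.comp hψ₂, hρ⟩, ?_⟩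
    have h1 : Tendsto (fun k => a (ψ (ψ₂ k))) atTop (𝓝 (∫ z, f₀ z ∂(ρ : Measure M))) :=
      ((ProbabilityMeasure.tendsto_iff_forall_integral_tendsto).mp hρ) f₀
    have h2 : Tendsto (fun k => a (ψ (ψ₂ k))) atTop (𝓝 c) := by
      have := hψc.comp hψ₂.tendsto_atTop
      exact this
    exact tendsto_nhds_unique h1 h2
  -- conclude: `pomega f x` is uncountable
  intro hcount
  have himg : Set.Ioo (min I₁ I₂) (max I₁ I₂) ⊆
      (fun μ : ProbabilityMeasure M => ∫ z, f₀ z ∂(μ : Measure M)) '' pomega f x := by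
    rintro c ⟨h1, h2⟩
    obtain ⟨ρ, hρ, hc⟩ := key c h1 h2
    exact ⟨ρ, hρ, hc⟩
  have hcnt : (Set.Ioo (min I₁ I₂) (max I₁ I₂)).Countable := (hcount.image _).mono himg
  have hcard := Cardinal.mk_Ioo_real hlt
  have hle := hcnt.le_aleph0
  rw [hcard] at hle
  exact absurd hle Cardinal.aleph0_lt_continuum.not_ge
end
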